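/- Let x and y be p-strings with ⟨x[2..]⟩ < ⟨y[2..]⟩ lexicographically, and suppose at least one of fce(x), fce(y) is a static symbol. If fce(x) ≠ fce(y), then lcp(⟨x⟩,⟨y⟩) = 0 and ⟨x⟩ < ⟨y⟩ iff fce(x) < fce(y); if fce(x) = fce(y), then lcp(⟨x⟩,⟨y⟩) = lcp(⟨x[2..]⟩,⟨y[2..]⟩)+1, lcp∞(⟨x⟩,⟨y⟩) = lcp∞(⟨x[2..]⟩,⟨y[2..]⟩), and ⟨x⟩ < ⟨y⟩. -/

import Mathlib

/-- Symbols of a parameterized string: static symbols `s a` (from Σs) and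
parameter symbols `p a` (from Σp). -/
inductive PSym where
  | s : ℕ → PSym
  | p : ℕ → PSym
deriving DecidableEq

/-- Symbols of a p-encoded string: static symbols, finite distances, and ∞. -/
inductive Enc where
  | s : ℕ → Enc
  | fin : ℕ → Enc
  | inf : Enc
deriving DecidableEq

/-- Order embedding: static symbols < natural numbers < ∞. -/
def Enc.toPair : Enc → ℕ ×ₗ ℕ
  | .s a => toLex (0, a)
  | .fin d => toLex (1, d)
  | .inf => toLex (2, 0)

instance : LinearOrder Enc :=
  LinearOrder.lift' Enc.toPair (by
    rintro (a | a | _) (b | b | _) h <;>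
      simp_all [Enc.toPair, toLex_inj, Prod.ext_iff])

/-- Largest position `j < i` (0-based) carrying the same symbol as position `i`. -/
def prevOcc (w : List PSym) (i : ℕ) : Option ℕ :=
  ((List.range i).filter (fun j => w[j]? = w[i]?)).max?

/-- The p-encoding of position `i` (0-based) of `w`. -/
def pencSym (w : List PSym) (i : ℕ) : Enc :=
  match w[i]? with
  | some (PSym.s a) => Enc.s a
  | some (PSym.p _) =>
    match prevOcc w i with
    | some j => Enc.fin (i - j)
    | none => Enc.inf
  | none => Enc.inf

/-- The p-encoding ⟨w⟩ of a p-string `w`. -/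
def penc (w : List PSym) : List Enc :=
  (List.range w.length).map (pencSym w)

/-- Lexicographic (strict) order on p-encoded strings. -/
def lexLt (x y : List Enc) : Prop := List.Lex (· < ·) x y

def lexLe (x y : List Enc) : Prop := lexLt x y ∨ x = y

/-- Length of the longest common prefix. -/
def lcp {α : Type*} [DecidableEq α] : List α → List α → ℕ
  | a :: x, b :: y => if a = b then lcp x y + 1 else 0
  | _, _ => 0

/-- Number of ∞'s in the longest common prefix of two p-encoded strings. -/
def lcpInf (x y : List Enc) : ℕ := (x.take (lcp x y)).count Enc.inf

/-- Number of distinct p-symbols occurring in `w` (denoted |w|_p). -/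
def distinctP (w : List PSym) : ℕ :=
  (w.filterMap (fun s => match s with | PSym.p a => some a | PSym.s _ => none)).dedup.length

/-- For `w` starting with a p-symbol: the rank of `w[1]` among the distinct
p-symbols of `w[1..h+1]`, where `h+1 = min{|w|, second occurrence of w[1] in w}`. -/
def fceRank (w : List PSym) : ℕ :=
  match w with
  | [] => 0
  | c :: rest => distinctP ((c :: rest).take (min (c :: rest).length (2 + rest.idxOf c)))

/-- The function fce from the paper; `fce ε = $` is modelled as `Enc.s 0`. -/
def fce (w : List PSym) : Enc :=
  match w with
  | [] => Enc.s 0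
  | PSym.s a :: _ => Enc.s a
  | w => Enc.fin (fceRank w)


lemma max?_map_succ (l : List ℕ) : (l.map Nat.succ).max? = l.max?.map Nat.succ := by
  induction l with
  | nil => rfl
  | cons a l ih =>
    simp only [List.map_cons, List.max?_cons, ih]
    cases l.max? <;> simp [Nat.succ_max_succ]

lemma s_lt_fin (a r : ℕ) : Enc.s a < Enc.fin r := by
  show Enc.toPair _ < Enc.toPair _
  exact Prod.Lex.left _ _ (by norm_num)

lemma s_lt_inf (a : ℕ) : Enc.s a < Enc.inf := by
  show Enc.toPair _ < Enc.toPair _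
  exact Prod.Lex.left _ _ (by norm_num)

lemma s_lt_s_iff (a b : ℕ) : Enc.s a < Enc.s b ↔ a < b := by
  show Enc.toPair _ < Enc.toPair _ ↔ _
  constructor
  · intro h
    cases h with
    | left _ _ h => omega
    | right _ h => exact h
  · intro h; exact Prod.Lex.right _ h

lemma lex_cons_iff (a b : Enc) (l m : List Enc) :
    List.Lex (· < ·) (a::l) (b::m) ↔ a < b ∨ (a = b ∧ List.Lex (· < ·) l m) := by
  constructor
  · intro h; cases h with
    | cons h => exact Or.inr ⟨rfl, h⟩
    | rel h => exact Or.inl h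
  · rintro (h | ⟨rfl, h⟩); exacts [List.Lex.rel h, List.Lex.cons h]

lemma prevOcc_zero (w : List PSym) : prevOcc w 0 = none := rfl

lemma prevOcc_cons_s (a : ℕ) (t : List PSym) (i : ℕ) (b : ℕ)
    (hb : t[i]? = some (PSym.p b)) :
    prevOcc (PSym.s a :: t) (i + 1) = (prevOcc t i).map Nat.succ := by
  unfold prevOcc
  rw [List.range_succ_eq_map]
  have h1 : ((PSym.s a :: t))[i+1]? = t[i]? := List.getElem?_cons_succ
  rw [List.filter_cons]
  have h0 : (decide ((PSym.s a :: t)[0]? = (PSym.s a :: t)[i+1]?)) = false := by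
    simp [h1, hb]
  rw [h0]
  simp only [cond_false, List.filter_map]
  have hpred : ∀ j, ((fun j => decide ((PSym.s a :: t)[j]? = (PSym.s a :: t)[i+1]?)) ∘ Nat.succ) j
      = decide (t[j]? = t[i]?) := by
    intro j
    simp [Function.comp, h1, List.getElem?_cons_succ]
  rw [List.filter_congr (fun j _ => hpred j)]
  simp only [Bool.false_eq_true, if_false]
  rw [max?_map_succ]

lemma pencSym_cons_s (a : ℕ) (t : List PSym) (i : ℕ) :
    pencSym (PSym.s a :: t) (i + 1) = pencSym t i := by
  unfold pencSym
  have h1 : ((PSym.s a :: t))[i+1]? = t[i]? := List.getElem?_cons_succ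
  rw [h1]
  match ht : t[i]? with
  | none => rfl
  | some (PSym.s c) => rfl
  | some (PSym.p c) =>
    rw [prevOcc_cons_s a t i c ht]
    cases h : prevOcc t i with
    | none => rfl
    | some j => simp [Nat.succ_sub_succ]

lemma penc_cons_s (a : ℕ) (t : List PSym) :
    penc (PSym.s a :: t) = Enc.s a :: penc t := by
  unfold penc
  rw [List.length_cons, List.range_succ_eq_map, List.map_cons, List.map_map]
  congr 1
  · exact List.map_congr_left (fun i _ => pencSym_cons_s a t i)

lemma penc_cons_p (a : ℕ) (t : List PSym) :
    ∃ r, penc (PSym.p a :: t) = Enc.inf :: r := by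
  unfold penc
  rw [List.length_cons, List.range_succ_eq_map, List.map_cons]
  have h0 : pencSym (PSym.p a :: t) 0 = Enc.inf := by
    unfold pencSym
    rw [List.getElem?_cons_zero]
    rfl
  rw [h0]
  exact ⟨_, rfl⟩

/-- Cases (A1) and (A2) of Lemma 3: ⟨x[2..]⟩ < ⟨y[2..]⟩ and at least one of
fce(x), fce(y) is a static symbol. -/
theorem stmt5 (x y : List PSym) (hx : x ≠ []) (hy : y ≠ [])
    (hlt : lexLt (penc x.tail) (penc y.tail))
    (hs : (∃ a, fce x = Enc.s a) ∨ (∃ a, fce y = Enc.s a)) :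
    (fce x ≠ fce y →
      lcp (penc x) (penc y) = 0 ∧ (lexLt (penc x) (penc y) ↔ fce x < fce y)) ∧
    (fce x = fce y →
      lcp (penc x) (penc y) = lcp (penc x.tail) (penc y.tail) + 1 ∧
      lcpInf (penc x) (penc y) = lcpInf (penc x.tail) (penc y.tail) ∧
      lexLt (penc x) (penc y)) := by
  obtain ⟨a, xt, rfl⟩ | ⟨a, xt, rfl⟩ : (∃ a t, x = PSym.s a :: t) ∨ (∃ a t, x = PSym.p a :: t) := by
    match x with
    | PSym.s a :: t => exact Or.inl ⟨a, t, rfl⟩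
    | PSym.p a :: t => exact Or.inr ⟨a, t, rfl⟩
  all_goals
    obtain ⟨b, yt, rfl⟩ | ⟨b, yt, rfl⟩ : (∃ b t, y = PSym.s b :: t) ∨ (∃ b t, y = PSym.p b :: t) := by
      match y with
      | PSym.s b :: t => exact Or.inl ⟨b, t, rfl⟩
      | PSym.p b :: t => exact Or.inr ⟨b, t, rfl⟩
  · -- s, s
    rw [penc_cons_s, penc_cons_s] at *
    have hfx : fce (PSym.s a :: xt) = Enc.s a := rfl
    have hfy : fce (PSym.s b :: yt) = Enc.s b := rfl
    simp only [List.tail_cons] at hlt ⊢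
    constructor
    · intro hne
      rw [hfx, hfy] at hne ⊢
      have hab : a ≠ b := fun h => hne (by rw [h])
      have hab' : Enc.s a ≠ Enc.s b := fun h => hne h
      constructor
      · simp [lcp, hab']
      · rw [lexLt, lex_cons_iff]
        simp [hab']
    · intro heq
      rw [hfx, hfy] at heq
      have hab : a = b := by injection heq
      subst hab
      refine ⟨by simp [lcp], ?_, List.Lex.cons hlt⟩
      unfold lcpInf
      simp [lcp, List.count_cons]
  · -- s, p
    rw [penc_cons_s] at *
    obtain ⟨r, hr⟩ := penc_cons_p b yt
    rw [hr]
    have hfx : fce (PSym.s a :: xt) = Enc.s a := rfl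
    have hfy : fce (PSym.p b :: yt) = Enc.fin (fceRank (PSym.p b :: yt)) := rfl
    constructor
    · intro _
      constructor
      · simp [lcp]
      · rw [lexLt, lex_cons_iff, hfx, hfy]
        simp [s_lt_inf, s_lt_fin]
    · intro heq
      rw [hfx, hfy] at heq
      exact absurd heq (by simp)
  · -- p, s
    rw [penc_cons_s] at *
    obtain ⟨r, hr⟩ := penc_cons_p a xt
    rw [hr]
    have hfx : fce (PSym.p a :: xt) = Enc.fin (fceRank (PSym.p a :: xt)) := rfl
    have hfy : fce (PSym.s b :: yt) = Enc.s b := rfl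
    constructor
    · intro _
      constructor
      · simp [lcp]
      · rw [lexLt, lex_cons_iff, hfx, hfy]
        constructor
        · rintro (h | ⟨h, -⟩)
          · exact absurd h (by exact fun h => absurd (lt_trans h (s_lt_inf b)) (lt_irrefl _))
          · exact absurd h (by simp)
        · intro h
          exact absurd (lt_trans h (s_lt_fin b 0)) (by
            intro hh
            cases hh with
            | left _ _ hh => exact absurd hh (by norm_num)
            | right _ hh => exact absurd hh (by omega))
    · intro heq
      rw [hfx, hfy] at heq
      exact absurd heq (by simp)
  · -- p, p : excluded by hs
    exfalso
    have hfx : fce (PSym.p a :: xt) = Enc.fin (fceRank (PSym.p a :: xt)) := rfl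
    have hfy : fce (PSym.p b :: yt) = Enc.fin (fceRank (PSym.p b :: yt)) := rfl
    rcases hs with ⟨c, h⟩ | ⟨c, h⟩
    · rw [hfx] at h; exact absurd h (by simp)
    · rw [hfy] at h; exact absurd h (by simp)
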